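/- Suppose τ = 0 in the multi-task elastic-net (multi-task group Lasso) and let c ∈ (0,1). On the event U₁ = {B̂ has at most n(1−c)/2 nonzero rows}: the interaction matrix Â is positive semidefinite with ‖Â/n‖_op ≤ |Ŝupp|/n ≤ (1−c)/2 < 1, hence ‖I_T − Â/n‖_op ≤ 1 and ‖(I_T − Â/n)⁻¹‖_op ≤ (1 − (1−c)/2)⁻¹ = 2/(1+c); consequently E[1_{U₁} · ‖(I_T − Â/n)⁻¹‖_op] ≤ 2/(1+c). -/

import Mathlib

open MeasureTheory ProbabilityTheory Matrix Filter
open scoped BigOperators Kronecker NNReal ENNReal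

noncomputable section

namespace MTS

instance matMeasurableSpace {a b : Type*} : MeasurableSpace (Matrix a b ℝ) :=
  inferInstanceAs (MeasurableSpace (a → b → ℝ))

instance matNormedAddCommGroup {a b : Type*} [Fintype a] [Fintype b] :
    NormedAddCommGroup (Matrix a b ℝ) :=
  inferInstanceAs (NormedAddCommGroup (a → b → ℝ))

instance matNormedSpace {a b : Type*} [Fintype a] [Fintype b] :
    NormedSpace ℝ (Matrix a b ℝ) :=
  inferInstanceAs (NormedSpace ℝ (a → b → ℝ))

instance matMeasureSpace {a b : Type*} [Fintype a] [Fintype b] :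
    MeasureSpace (Matrix a b ℝ) :=
  inferInstanceAs (MeasureSpace (a → b → ℝ))

/-- Squared Frobenius norm of a matrix. -/
def frobSq {a b : Type*} [Fintype a] [Fintype b] (A : Matrix a b ℝ) : ℝ :=
  ∑ i, ∑ j, A i j ^ 2

/-- Frobenius norm of a matrix. -/
def frob {a b : Type*} [Fintype a] [Fintype b] (A : Matrix a b ℝ) : ℝ :=
  Real.sqrt (frobSq A)

/-- ℓ2-operator norm of a matrix. -/
def opNorm {a b : Type*} [Fintype a] [Fintype b] [DecidableEq b] (A : Matrix a b ℝ) : ℝ :=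
  ‖LinearMap.toContinuousLinearMap (Matrix.toEuclideanLin A)‖

open Classical in
def matSqrt {p : ℕ} (A : Matrix (Fin p) (Fin p) ℝ) : Matrix (Fin p) (Fin p) ℝ :=
  if h : A.PosSemidef then
    h.1.eigenvectorUnitary.1 * Matrix.diagonal ((RCLike.ofReal : ℝ → ℝ) ∘ (Real.sqrt ∘ h.1.eigenvalues)) *
      (star h.1.eigenvectorUnitary : Matrix (Fin p) (Fin p) ℝ)
  else 0

/-- Nuclear norm of a square matrix. -/
def nucNorm {T : ℕ} (A : Matrix (Fin T) (Fin T) ℝ) : ℝ :=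
  (matSqrt (Aᵀ * A)).trace

open Classical in
def pinv {N : Type*} [Fintype N] [DecidableEq N] (M : Matrix N N ℝ) : Matrix N N ℝ :=
  if h : ∃ G : Matrix N N ℝ,
      M * G * M = M ∧ G * M * G = G ∧ (M * G)ᵀ = M * G ∧ (G * M)ᵀ = G * M
  then h.choose else 0

/-- The ℓ_{2,1} norm of a matrix: sum of the Euclidean norms of its rows. -/
def norm21 {p T : ℕ} (B : Matrix (Fin p) (Fin T) ℝ) : ℝ :=
  ∑ j, Real.sqrt (∑ t, B j t ^ 2)

/-- The multi-task elastic-net objective function. -/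
def objective {p T : ℕ} (n : ℕ) (lam tau : ℝ) (Y : Matrix (Fin n) (Fin T) ℝ)
    (X : Matrix (Fin n) (Fin p) ℝ) (B : Matrix (Fin p) (Fin T) ℝ) : ℝ :=
  (1 / (2 * (n : ℝ))) * frobSq (Y - X * B) + lam * norm21 B + (tau / 2) * frobSq B

open Classical in
def nnzRows {p T : ℕ} (B : Matrix (Fin p) (Fin T) ℝ) : ℕ :=
  (Finset.univ.filter fun j => B j ≠ 0).card

open Classical in
def nnzVec {p : ℕ} (b : Fin p → ℝ) : ℕ :=
  (Finset.univ.filter fun j => b j ≠ 0).card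

open Classical in
def rowHess {T : ℕ} (lam : ℝ) (r : Fin T → ℝ) : Matrix (Fin T) (Fin T) ℝ :=
  if r = 0 then 0
  else (lam * (Real.sqrt (∑ t, r t ^ 2))⁻¹) •
    ((1 : Matrix (Fin T) (Fin T) ℝ) - (∑ t, r t ^ 2)⁻¹ • Matrix.vecMulVec r r)

open Classical in
def Psupp {p T : ℕ} (B : Matrix (Fin p) (Fin T) ℝ) : Matrix (Fin p) (Fin p) ℝ :=
  Matrix.of fun j k => if j = k ∧ B j ≠ 0 then (1 : ℝ) else 0

open Classical in
def Xsupp {n p T : ℕ} (X : Matrix (Fin n) (Fin p) ℝ) (B : Matrix (Fin p) (Fin T) ℝ) :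
    Matrix (Fin n) (Fin p) ℝ :=
  Matrix.of fun i j => if B j ≠ 0 then X i j else 0

/-- The matrix `M = I_T ⊗ (X_ŜᵀX_Ŝ + τ n P_Ŝ) + n Σ_{k ∈ Ŝ} (H^{(k)} ⊗ e_k e_kᵀ)`. -/
def Mmat {p T : ℕ} (n : ℕ) (lam tau : ℝ) (X : Matrix (Fin n) (Fin p) ℝ)
    (B : Matrix (Fin p) (Fin T) ℝ) : Matrix (Fin T × Fin p) (Fin T × Fin p) ℝ :=
  (1 : Matrix (Fin T) (Fin T) ℝ) ⊗ₖ ((Xsupp X B)ᵀ * Xsupp X B + (tau * n) • Psupp B)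
    + (n : ℝ) • ∑ k : Fin p, (rowHess lam (B k)) ⊗ₖ (Matrix.single k k (1 : ℝ))

/-- The interaction matrix `Â = Σ_i (I_T ⊗ e_iᵀX) M† (I_T ⊗ Xᵀe_i)`, written entrywise:
`Â_{t,t'} = Σ_i Σ_j Σ_j' X_{ij} (M†)_{(t,j),(t',j')} X_{ij'}`. -/
def Amat {p T : ℕ} (n : ℕ) (lam tau : ℝ) (X : Matrix (Fin n) (Fin p) ℝ)
    (B : Matrix (Fin p) (Fin T) ℝ) : Matrix (Fin T) (Fin T) ℝ :=
  Matrix.of fun t t' => ∑ i : Fin n, ∑ j : Fin p, ∑ j' : Fin p,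
    X i j * pinv (Mmat n lam tau X B) (t, j) (t', j') * X i j'

/-- The proposed noise covariance estimator `Ŝ`. -/
def Scov {p T : ℕ} (n : ℕ) (lam tau : ℝ) (Sig : Matrix (Fin p) (Fin p) ℝ)
    (X : Matrix (Fin n) (Fin p) ℝ) (Y : Matrix (Fin n) (Fin T) ℝ)
    (B : Matrix (Fin p) (Fin T) ℝ) : Matrix (Fin T) (Fin T) ℝ :=
  ((n : ℝ) • (1 : Matrix (Fin T) (Fin T) ℝ) - Amat n lam tau X B)⁻¹ *
    ((Y - X * B)ᵀ * ((((p : ℝ) + (n : ℝ)) • (1 : Matrix (Fin n) (Fin n) ℝ))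
        - X * Sig⁻¹ * Xᵀ) * (Y - X * B)
      - Amat n lam tau X B * ((Y - X * B)ᵀ * (Y - X * B))
      - ((Y - X * B)ᵀ * (Y - X * B)) * Amat n lam tau X B) *
    ((n : ℝ) • (1 : Matrix (Fin T) (Fin T) ℝ) - Amat n lam tau X B)⁻¹

/-- A random vector is centered Gaussian with covariance `S`: every linear functional of it
is a centered real Gaussian with the corresponding variance. -/
def IsGaussianVec {Ω : Type*} [MeasurableSpace Ω] (P : Measure Ω) {T : ℕ}
    (v : Ω → Fin T → ℝ) (S : Matrix (Fin T) (Fin T) ℝ) : Prop :=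
  ∀ a : Fin T → ℝ,
    Measure.map (fun ω => ∑ t, a t * v ω t) P =
      gaussianReal 0 (Real.toNNReal (a ⬝ᵥ S.mulVec a))

/-- The rows of the random matrix `M` are i.i.d. centered Gaussian vectors with
covariance `S`. -/
def IIDGaussianRows {Ω : Type*} [MeasurableSpace Ω] (P : Measure Ω) {n T : ℕ}
    (M : Ω → Matrix (Fin n) (Fin T) ℝ) (S : Matrix (Fin T) (Fin T) ℝ) : Prop :=
  (∀ i j, Measurable fun ω => M ω i j) ∧
    iIndepFun (fun i ω => M ω i) P ∧
    ∀ i, IsGaussianVec P (fun ω => M ω i) S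

/-- All the assumptions of the multi-task linear model with multi-task elastic-net
estimator `Bhat`. -/
structure ModelHyps {n p T : ℕ} {Ω : Type*} [MeasurableSpace Ω] (P : Measure Ω)
    (Sig : Matrix (Fin p) (Fin p) ℝ) (S : Matrix (Fin T) (Fin T) ℝ)
    (Bstar : Matrix (Fin p) (Fin T) ℝ)
    (X : Ω → Matrix (Fin n) (Fin p) ℝ) (E : Ω → Matrix (Fin n) (Fin T) ℝ)
    (lam tau : ℝ) (Bhat : Ω → Matrix (Fin p) (Fin T) ℝ) : Prop where
  prob : IsProbabilityMeasure P
  hn : 0 < n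
  hp : 0 < p
  hT : 0 < T
  hSig : Sig.PosDef
  hS : S.PosSemidef
  hX : IIDGaussianRows P X Sig
  hE : IIDGaussianRows P E S
  indep : IndepFun X E P
  hlam : 0 ≤ lam
  htau : 0 ≤ tau
  hBhat_meas : Measurable Bhat
  hBhat_min : ∀ ω B, objective n lam tau (X ω * Bstar + E ω) (X ω) (Bhat ω)
      ≤ objective n lam tau (X ω * Bstar + E ω) (X ω) B

/-- The event `U₁` that `B̂` has at most `n(1-c)/2` nonzero rows. -/
def U1set {p T : ℕ} {Ω : Type*} (Bhat : Ω → Matrix (Fin p) (Fin T) ℝ) (n : ℕ) (c : ℝ) :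
    Set Ω :=
  {ω | (nnzRows (Bhat ω) : ℝ) ≤ (n : ℝ) * (1 - c) / 2}

/-- Smallest eigenvalue of a symmetric matrix (junk value `0` otherwise). -/
def eigMin {p : ℕ} (A : Matrix (Fin p) (Fin p) ℝ) : ℝ :=
  if h : A.IsHermitian then ⨅ i, h.eigenvalues i else 0


/-- Residual matrix `F = Y - XB` with `Y = XB* + E`. -/
def resid {n p T : ℕ} (Bstar : Matrix (Fin p) (Fin T) ℝ) (X : Matrix (Fin n) (Fin p) ℝ)
    (E : Matrix (Fin n) (Fin T) ℝ) (B : Matrix (Fin p) (Fin T) ℝ) :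
    Matrix (Fin n) (Fin T) ℝ :=
  X * Bstar + E - X * B

/-- Error matrix `H = Σ^{1/2}(B - B*)`. -/
def herr {p T : ℕ} (Sig : Matrix (Fin p) (Fin p) ℝ) (Bstar B : Matrix (Fin p) (Fin T) ℝ) :
    Matrix (Fin p) (Fin T) ℝ :=
  matSqrt Sig * (B - Bstar)

/-- The matrix `I_T - Â/n`. -/
def ImA {p T : ℕ} (n : ℕ) (lam tau : ℝ) (X : Matrix (Fin n) (Fin p) ℝ)
    (B : Matrix (Fin p) (Fin T) ℝ) : Matrix (Fin T) (Fin T) ℝ :=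
  (1 : Matrix (Fin T) (Fin T) ℝ) - (n : ℝ)⁻¹ • Amat n lam tau X B

/-- Residual as a function of `Z`, where `X = ZΣ^{1/2}` and `Y = XB* + E`. -/
def Fz {n p T : ℕ} (Sig : Matrix (Fin p) (Fin p) ℝ) (Bstar : Matrix (Fin p) (Fin T) ℝ)
    (E : Matrix (Fin n) (Fin T) ℝ) (Z : Matrix (Fin n) (Fin p) ℝ)
    (B : Matrix (Fin p) (Fin T) ℝ) : Matrix (Fin n) (Fin T) ℝ :=
  Z * matSqrt Sig * Bstar + E - Z * matSqrt Sig * B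

/-- `D(Z) = (‖H(Z)‖_F² + ‖F(Z)‖_F²/n)^{1/2}`. -/
def Dz {n p T : ℕ} (Sig : Matrix (Fin p) (Fin p) ℝ) (Bstar : Matrix (Fin p) (Fin T) ℝ)
    (E : Matrix (Fin n) (Fin T) ℝ) (Z : Matrix (Fin n) (Fin p) ℝ)
    (B : Matrix (Fin p) (Fin T) ℝ) : ℝ :=
  Real.sqrt (frob (herr Sig Bstar B) ^ 2 + frob (Fz Sig Bstar E Z B) ^ 2 / (n : ℝ))

/-- The distribution of an `n × p` random matrix with i.i.d. standard Gaussian entries. -/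
def stdGaussMat (n p : ℕ) : Measure (Matrix (Fin n) (Fin p) ℝ) :=
  Measure.pi fun _ : Fin n => Measure.pi fun _ : Fin p => gaussianReal 0 1

/-- The method-of-moments estimator of the noise covariance. -/
def SmmEst {T : ℕ} (n p : ℕ) (Sig : Matrix (Fin p) (Fin p) ℝ)
    (X : Matrix (Fin n) (Fin p) ℝ) (Y : Matrix (Fin n) (Fin T) ℝ) :
    Matrix (Fin T) (Fin T) ℝ :=
  (((n : ℝ) + 1 + (p : ℝ)) / ((n : ℝ) * ((n : ℝ) + 1))) • (Yᵀ * Y)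
    - (1 / ((n : ℝ) * ((n : ℝ) + 1))) • (Yᵀ * X * Sig⁻¹ * Xᵀ * Y)


set_option linter.unusedSectionVars false

section QuadHelpers

variable {N : Type*} [Fintype N] [DecidableEq N]

lemma dot_symm {A : Matrix N N ℝ} (hA : Aᵀ = A) (x y : N → ℝ) :
    x ⬝ᵥ A *ᵥ y = y ⬝ᵥ A *ᵥ x := by
  rw [Matrix.dotProduct_mulVec, ← Matrix.mulVec_transpose, hA, dotProduct_comm]

lemma quad_cs {A : Matrix N N ℝ} (hA : Aᵀ = A) (hP : ∀ x, 0 ≤ x ⬝ᵥ A *ᵥ x) (a b : N → ℝ) :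
    (a ⬝ᵥ A *ᵥ b) ^ 2 ≤ (a ⬝ᵥ A *ᵥ a) * (b ⬝ᵥ A *ᵥ b) := by
  have key : ∀ t : ℝ, 0 ≤ (b ⬝ᵥ A *ᵥ b) * (t * t) + (2 * (a ⬝ᵥ A *ᵥ b)) * t + a ⬝ᵥ A *ᵥ a := by
    intro t
    have h := hP (a + t • b)
    have hba := dot_symm hA b a
    simp only [Matrix.mulVec_add, Matrix.mulVec_smul, dotProduct_add,
      add_dotProduct, smul_dotProduct, dotProduct_smul,
      smul_eq_mul, hba] at h
    ring_nf at h ⊢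
    linarith [h]
  have := discrim_le_zero key
  rw [discrim] at this
  nlinarith [this]

end QuadHelpers

section OpNormHelpers

lemma dot_self_nonneg {N : Type*} [Fintype N] (x : N → ℝ) : 0 ≤ x ⬝ᵥ x :=
  Finset.sum_nonneg fun i _ => mul_self_nonneg _

lemma dot_cs {N : Type*} [Fintype N] (x y : N → ℝ) :
    (x ⬝ᵥ y) ^ 2 ≤ (x ⬝ᵥ x) * (y ⬝ᵥ y) := by
  simpa [dotProduct, pow_two] using
    Finset.sum_mul_sq_le_sq_mul_sq Finset.univ x y

lemma opNorm_le_of_quad {T : ℕ} {A : Matrix (Fin T) (Fin T) ℝ} (hA : Aᵀ = A) {C : ℝ}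
    (hC : 0 ≤ C) (h0 : ∀ x, 0 ≤ x ⬝ᵥ A *ᵥ x) (h1 : ∀ x, x ⬝ᵥ A *ᵥ x ≤ C * (x ⬝ᵥ x)) :
    opNorm A ≤ C := by
  rw [opNorm]
  refine ContinuousLinearMap.opNorm_le_bound _ hC ?_
  intro v
  set x : Fin T → ℝ := fun i => v i with hx
  have hvx : ‖v‖ ^ 2 = x ⬝ᵥ x := by
    rw [EuclideanSpace.norm_eq, Real.sq_sqrt (Finset.sum_nonneg fun i _ => sq_nonneg _)]
    simp [dotProduct, pow_two]
    rfl
  set y : Fin T → ℝ := A *ᵥ x with hy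
  have happ : ‖(LinearMap.toContinuousLinearMap (Matrix.toEuclideanLin A)) v‖ ^ 2 = y ⬝ᵥ y := by
    rw [LinearMap.coe_toContinuousLinearMap', Matrix.toEuclideanLin_apply,
      EuclideanSpace.norm_eq, Real.sq_sqrt (Finset.sum_nonneg fun i _ => sq_nonneg _)]
    simp [dotProduct, pow_two]
    rfl
  have hyy : y ⬝ᵥ y = y ⬝ᵥ A *ᵥ x := rfl
  have hcs : (y ⬝ᵥ A *ᵥ x) ^ 2 ≤ (C * (y ⬝ᵥ y)) * (C * (x ⬝ᵥ x)) :=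
    le_trans (quad_cs hA h0 y x) (mul_le_mul (h1 y) (h1 x) (h0 x) (le_trans (h0 y) (h1 y)))
  have hkey : y ⬝ᵥ y ≤ C ^ 2 * (x ⬝ᵥ x) := by
    rcases eq_or_lt_of_le (dot_self_nonneg y) with h | h
    · nlinarith [dot_self_nonneg x]
    · rw [hyy] at hcs
      nlinarith [hcs]
  have h2 : ‖(LinearMap.toContinuousLinearMap (Matrix.toEuclideanLin A)) v‖ ^ 2
      ≤ (C * ‖v‖) ^ 2 := by
    rw [happ]
    calc y ⬝ᵥ y ≤ C ^ 2 * (x ⬝ᵥ x) := hkey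
    _ = (C * ‖v‖) ^ 2 := by rw [← hvx]; ring
  calc ‖(LinearMap.toContinuousLinearMap (Matrix.toEuclideanLin A)) v‖
      = Real.sqrt (‖(LinearMap.toContinuousLinearMap (Matrix.toEuclideanLin A)) v‖ ^ 2) :=
        (Real.sqrt_sq (norm_nonneg _)).symm
    _ ≤ Real.sqrt ((C * ‖v‖) ^ 2) := Real.sqrt_le_sqrt h2
    _ = C * ‖v‖ := Real.sqrt_sq (by positivity)

end OpNormHelpers

section InvHelpers

lemma opNorm_inv_le {T : ℕ} {A : Matrix (Fin T) (Fin T) ℝ} (hA : Aᵀ = A) {ε : ℝ}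
    (hε : 0 < ε) (h : ∀ x, ε * (x ⬝ᵥ x) ≤ x ⬝ᵥ A *ᵥ x) :
    opNorm A⁻¹ ≤ ε⁻¹ := by
  have hherm : A.IsHermitian := by
    rw [Matrix.IsHermitian, Matrix.conjTranspose_eq_transpose_of_trivial]; exact hA
  have hpd : A.PosDef := by
    refine Matrix.PosDef.of_dotProduct_mulVec_pos hherm fun x hx => ?_
    simp only [star_trivial]
    have hxx : 0 < x ⬝ᵥ x := by
      rcases eq_or_lt_of_le (dot_self_nonneg x) with h0 | h0
      · exact absurd (dotProduct_self_eq_zero.mp h0.symm) hx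
      · exact h0
    calc (0:ℝ) < ε * (x ⬝ᵥ x) := by positivity
    _ ≤ _ := h x
  have hdet : IsUnit A.det := hpd.det_pos.ne'.isUnit
  have hmulinv : A * A⁻¹ = 1 := Matrix.mul_nonsing_inv A hdet
  have hAinvT : (A⁻¹)ᵀ = A⁻¹ := by rw [Matrix.transpose_nonsing_inv, hA]
  have key : ∀ x : Fin T → ℝ, 0 ≤ x ⬝ᵥ A⁻¹ *ᵥ x ∧ x ⬝ᵥ A⁻¹ *ᵥ x ≤ ε⁻¹ * (x ⬝ᵥ x) := by
    intro x
    set y : Fin T → ℝ := A⁻¹ *ᵥ x with hy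
    have hAy : A *ᵥ y = x := by
      rw [hy, Matrix.mulVec_mulVec, hmulinv, Matrix.one_mulVec]
    set a : ℝ := y ⬝ᵥ A *ᵥ y with ha
    have h1 : x ⬝ᵥ A⁻¹ *ᵥ x = a := by
      rw [← hy, ← hAy, dotProduct_comm]
    have ha0 : 0 ≤ a :=
      le_trans (mul_nonneg hε.le (dot_self_nonneg y)) (h y)
    have hyx : y ⬝ᵥ x = a := by rw [← hAy]
    have hcs : a ^ 2 ≤ (y ⬝ᵥ y) * (x ⬝ᵥ x) := by rw [← hyx]; exact dot_cs y x
    have hyy : ε * (y ⬝ᵥ y) ≤ a := h y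
    constructor
    · rw [h1]; exact ha0
    · rw [h1]
      rcases eq_or_lt_of_le ha0 with h0 | h0
      · rw [← h0]
        exact mul_nonneg (inv_pos.mpr hε).le (dot_self_nonneg x)
      · have h2 : a ^ 2 * ε ≤ a * (x ⬝ᵥ x) := by nlinarith [dot_self_nonneg x]
        have h3 : a * ε ≤ x ⬝ᵥ x := by nlinarith
        rw [← mul_le_mul_iff_right₀ hε]
        calc ε * a = a * ε := mul_comm _ _
        _ ≤ x ⬝ᵥ x := h3
        _ = ε * (ε⁻¹ * (x ⬝ᵥ x)) := by field_simp
    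
  exact opNorm_le_of_quad hAinvT (le_of_lt (inv_pos.mpr hε)) (fun x => (key x).1)
    (fun x => (key x).2)

end InvHelpers

section MPHelpers

variable {N : Type*} [Fintype N] [DecidableEq N]

/-- The Moore–Penrose property matching the definition of `pinv`. -/
def IsMP (M G : Matrix N N ℝ) : Prop :=
  M * G * M = M ∧ G * M * G = G ∧ (M * G)ᵀ = M * G ∧ (G * M)ᵀ = G * M

lemma mp_unique {M G₁ G₂ : Matrix N N ℝ} (h1 : IsMP M G₁) (h2 : IsMP M G₂) : G₁ = G₂ := by
  obtain ⟨h11, h12, h13, h14⟩ := h1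
  obtain ⟨h21, h22, h23, h24⟩ := h2
  have e1 : M * G₁ = M * G₂ := by
    calc M * G₁ = (M * G₁)ᵀ := h13.symm
    _ = G₁ᵀ * Mᵀ := Matrix.transpose_mul _ _
    _ = G₁ᵀ * (M * G₂ * M)ᵀ := by rw [h21]
    _ = G₁ᵀ * (Mᵀ * (M * G₂)ᵀ) := by rw [Matrix.transpose_mul (M * G₂) M]
    _ = (G₁ᵀ * Mᵀ) * (M * G₂)ᵀ := by rw [mul_assoc]
    _ = (M * G₁)ᵀ * (M * G₂)ᵀ := by rw [← Matrix.transpose_mul M G₁]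
    _ = (M * G₁) * (M * G₂) := by rw [h13, h23]
    _ = ((M * G₁) * M) * G₂ := by rw [← mul_assoc]
    _ = M * G₂ := by rw [h11]
  have e2 : G₁ * M = G₂ * M := by
    calc G₁ * M = (G₁ * M)ᵀ := h14.symm
    _ = Mᵀ * G₁ᵀ := Matrix.transpose_mul _ _
    _ = (M * G₂ * M)ᵀ * G₁ᵀ := by rw [h21]
    _ = (M * (G₂ * M))ᵀ * G₁ᵀ := by rw [mul_assoc]
    _ = ((G₂ * M)ᵀ * Mᵀ) * G₁ᵀ := by rw [Matrix.transpose_mul M (G₂ * M)]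
    _ = (G₂ * M)ᵀ * (Mᵀ * G₁ᵀ) := by rw [mul_assoc]
    _ = (G₂ * M)ᵀ * (G₁ * M)ᵀ := by rw [← Matrix.transpose_mul G₁ M]
    _ = (G₂ * M) * (G₁ * M) := by rw [h14, h24]
    _ = G₂ * ((M * G₁) * M) := by rw [mul_assoc, ← mul_assoc M G₁ M]
    _ = G₂ * M := by rw [h11]
  calc G₁ = G₁ * M * G₁ := h12.symm
  _ = G₂ * M * G₁ := by rw [e2]
  _ = G₂ * (M * G₁) := mul_assoc _ _ _
  _ = G₂ * (M * G₂) := by rw [e1]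
  _ = G₂ * M * G₂ := (mul_assoc _ _ _).symm
  _ = G₂ := h22

lemma exists_mp {M : Matrix N N ℝ} (hM : Mᵀ = M) : ∃ G : Matrix N N ℝ, IsMP M G := by
  have hherm : M.IsHermitian := by
    rw [Matrix.IsHermitian, Matrix.conjTranspose_eq_transpose_of_trivial]; exact hM
  set U : Matrix N N ℝ := (Matrix.IsHermitian.eigenvectorUnitary hherm : Matrix N N ℝ) with hU
  set V : Matrix N N ℝ := star U with hV
  have hUV : U * V = 1 := (Matrix.mem_unitaryGroup_iff).mp
    (Matrix.IsHermitian.eigenvectorUnitary hherm).2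
  have hVU : V * U = 1 := (Matrix.mem_unitaryGroup_iff').mp
    (Matrix.IsHermitian.eigenvectorUnitary hherm).2
  have hVt : Vᵀ = U := by
    rw [hV, Matrix.star_eq_conjTranspose, Matrix.conjTranspose_eq_transpose_of_trivial,
      Matrix.transpose_transpose]
  have hUt : Uᵀ = V := by
    rw [← hVt, Matrix.transpose_transpose]
  set d : N → ℝ := Matrix.IsHermitian.eigenvalues hherm with hd
  have hspec : M = U * Matrix.diagonal d * V := by
    have := Matrix.IsHermitian.spectral_theorem hherm
    rw [this, Unitary.conjStarAlgAut_apply]; rfl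
  set G : Matrix N N ℝ := U * Matrix.diagonal (fun i => (d i)⁻¹) * V with hG
  have hmul : ∀ a b : N → ℝ, (U * Matrix.diagonal a * V) * (U * Matrix.diagonal b * V)
      = U * Matrix.diagonal (fun i => a i * b i) * V := by
    intro a b
    calc (U * Matrix.diagonal a * V) * (U * Matrix.diagonal b * V)
        = U * Matrix.diagonal a * ((V * U) * (Matrix.diagonal b * V)) := by
          simp only [mul_assoc]
    _ = U * (Matrix.diagonal a * Matrix.diagonal b) * V := by
          rw [hVU, one_mul]; simp only [mul_assoc]
    _ = U * Matrix.diagonal (fun i => a i * b i) * V := by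
          rw [Matrix.diagonal_mul_diagonal]
  have htr : ∀ a : N → ℝ, (U * Matrix.diagonal a * V)ᵀ = U * Matrix.diagonal a * V := by
    intro a
    rw [Matrix.transpose_mul, Matrix.transpose_mul, Matrix.diagonal_transpose, hVt, hUt,
      mul_assoc]
  have key1 : (fun i => d i * (d i)⁻¹ * d i) = d := by
    funext i
    rcases eq_or_ne (d i) 0 with h | h
    · simp [h]
    · field_simp
  have key2 : (fun i => (d i)⁻¹ * d i * (d i)⁻¹) = fun i => (d i)⁻¹ := by
    funext i
    rcases eq_or_ne (d i) 0 with h | h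
    · simp [h]
    · field_simp
  refine ⟨G, ?_, ?_, ?_, ?_⟩
  · rw [hspec, hG, hmul, hmul, key1]
  · rw [hspec, hG, hmul, hmul, key2]
  · rw [hspec, hG, hmul, htr]
  · rw [hspec, hG, hmul, htr]

lemma pinv_isMP {M : Matrix N N ℝ} (hM : Mᵀ = M) : IsMP M (pinv M) := by
  have hex : ∃ G : Matrix N N ℝ,
      M * G * M = M ∧ G * M * G = G ∧ (M * G)ᵀ = M * G ∧ (G * M)ᵀ = G * M := exists_mp hM
  rw [pinv, dif_pos hex]
  exact hex.choose_spec

lemma pinv_transpose {M : Matrix N N ℝ} (hM : Mᵀ = M) : (pinv M)ᵀ = pinv M := by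
  obtain ⟨h1, h2, h3, h4⟩ := pinv_isMP hM
  set G := pinv M with hGdef
  refine mp_unique ⟨?_, ?_, ?_, ?_⟩ (pinv_isMP hM)
  · have := congrArg Matrix.transpose h1
    simp only [Matrix.transpose_mul, hM, mul_assoc] at this ⊢
    exact this
  · have := congrArg Matrix.transpose h2
    simp only [Matrix.transpose_mul, hM, mul_assoc] at this ⊢
    exact this
  · calc (M * Gᵀ) ᵀ = G * Mᵀ := by rw [Matrix.transpose_mul, Matrix.transpose_transpose]
    _ = G * M := by rw [hM]
    _ = (G * M)ᵀ := h4.symm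
    _ = Mᵀ * Gᵀ := Matrix.transpose_mul _ _
    _ = M * Gᵀ := by rw [hM]
  · calc (Gᵀ * M) ᵀ = Mᵀ * G := by rw [Matrix.transpose_mul, Matrix.transpose_transpose]
    _ = M * G := by rw [hM]
    _ = (M * G)ᵀ := h3.symm
    _ = Gᵀ * Mᵀ := Matrix.transpose_mul _ _
    _ = Gᵀ * M := by rw [hM]

lemma pinv_comm {M : Matrix N N ℝ} (hM : Mᵀ = M) : M * pinv M = pinv M * M := by
  obtain ⟨h1, h2, h3, h4⟩ := pinv_isMP hM
  calc M * pinv M = (M * pinv M)ᵀ := h3.symm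
  _ = (pinv M)ᵀ * Mᵀ := Matrix.transpose_mul _ _
  _ = pinv M * M := by rw [pinv_transpose hM, hM]

lemma pinv_quad_nonneg {M : Matrix N N ℝ} (hM : Mᵀ = M)
    (hP : ∀ x, 0 ≤ x ⬝ᵥ M *ᵥ x) (x : N → ℝ) : 0 ≤ x ⬝ᵥ pinv M *ᵥ x := by
  obtain ⟨h1, h2, h3, h4⟩ := pinv_isMP hM
  set G := pinv M with hGdef
  have hGt : Gᵀ = G := pinv_transpose hM
  have : x ⬝ᵥ G *ᵥ x = (G *ᵥ x) ⬝ᵥ M *ᵥ (G *ᵥ x) := by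
    conv_lhs => rw [← h2]
    rw [← Matrix.mulVec_mulVec, ← Matrix.mulVec_mulVec, Matrix.dotProduct_mulVec x G,
      ← Matrix.mulVec_transpose, hGt]
  rw [this]
  exact hP _
   
lemma pinv_col_zero {M : Matrix N N ℝ} (hM : Mᵀ = M) {a : N}
    (ha : ∀ c, M c a = 0) (b : N) : pinv M b a = 0 := by
  obtain ⟨h1, h2, h3, h4⟩ := pinv_isMP hM
  set G := pinv M with hGdef
  have hGGM : G = (G * G) * M := by
    calc G = G * M * G := h2.symm
    _ = G * (M * G) := mul_assoc _ _ _
    _ = G * (G * M) := by rw [pinv_comm hM]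
    _ = (G * G) * M := by rw [← mul_assoc]
  rw [hGGM, Matrix.mul_apply]
  exact Finset.sum_eq_zero fun c _ => by rw [ha c, mul_zero]

lemma pinv_row_zero {M : Matrix N N ℝ} (hM : Mᵀ = M) {a : N}
    (ha : ∀ c, M c a = 0) (b : N) : pinv M a b = 0 := by
  have := pinv_col_zero hM ha b
  rw [← pinv_transpose hM]
  exact this

end MPHelpers

section AmatHelpers

variable {n p T : ℕ}

lemma rowHess_transpose (lam : ℝ) (r : Fin T → ℝ) :
    (rowHess lam r)ᵀ = rowHess lam r := by
  classical
  unfold rowHess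
  split_ifs with h
  · simp
  · rw [Matrix.transpose_smul, Matrix.transpose_sub,
      Matrix.transpose_one, Matrix.transpose_smul]
    congr 2
    ext i j
    simp [Matrix.vecMulVec_apply, mul_comm]

lemma rowHess_quad_nonneg {lam : ℝ} (hlam : 0 ≤ lam) (r : Fin T → ℝ) (y : Fin T → ℝ) :
    0 ≤ y ⬝ᵥ rowHess lam r *ᵥ y := by
  classical
  unfold rowHess
  split_ifs with h
  · simp
  · set s : ℝ := ∑ t, r t ^ 2 with hs
    have hs0 : 0 < s := by
      have hnn : ∀ t, (0:ℝ) ≤ r t ^ 2 := fun t => sq_nonneg _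
      rcases Function.ne_iff.mp h with ⟨t0, ht0⟩
      exact Finset.sum_pos' (fun t _ => hnn t) ⟨t0, Finset.mem_univ _, pow_two_pos_of_ne_zero ht0⟩
    have hq : y ⬝ᵥ ((1 : Matrix (Fin T) (Fin T) ℝ) - s⁻¹ • Matrix.vecMulVec r r) *ᵥ y
        = y ⬝ᵥ y - s⁻¹ * (r ⬝ᵥ y) ^ 2 := by
      rw [Matrix.sub_mulVec, dotProduct_sub, Matrix.one_mulVec, Matrix.smul_mulVec,
        dotProduct_smul]
      congr 1
      rw [smul_eq_mul]
      congr 1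
      have hv : Matrix.vecMulVec r r *ᵥ y = (r ⬝ᵥ y) • r := by
        ext i
        simp only [Matrix.mulVec, Matrix.vecMulVec_apply, dotProduct, Pi.smul_apply,
          smul_eq_mul, mul_assoc]
        rw [← Finset.mul_sum]
        exact mul_comm _ _
      rw [hv, dotProduct_smul, smul_eq_mul, dotProduct_comm y r, pow_two]
    rw [Matrix.smul_mulVec, dotProduct_smul, hq, smul_eq_mul]
    have hcs : (r ⬝ᵥ y) ^ 2 ≤ s * (y ⬝ᵥ y) := by
      simpa [dotProduct, pow_two, hs] using
        Finset.sum_mul_sq_le_sq_mul_sq Finset.univ r y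
    have h1 : s⁻¹ * (r ⬝ᵥ y) ^ 2 ≤ y ⬝ᵥ y := by
      have := mul_le_mul_of_nonneg_left hcs (inv_pos.mpr hs0).le
      rwa [← mul_assoc, inv_mul_cancel₀ hs0.ne', one_mul] at this
    have h2 : 0 ≤ lam * (Real.sqrt s)⁻¹ := by positivity
    exact mul_nonneg h2 (by linarith)

lemma Mmat_apply (lam : ℝ) (X : Matrix (Fin n) (Fin p) ℝ) (B : Matrix (Fin p) (Fin T) ℝ)
    (t t' : Fin T) (j j' : Fin p) :
    Mmat n lam 0 X B (t, j) (t', j')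
      = (if t = t' then ((Xsupp X B)ᵀ * Xsupp X B) j j' else 0)
        + (n : ℝ) * (if j = j' then rowHess lam (B j) t t' else 0) := by
  classical
  rw [Mmat]
  have h0 : ((0:ℝ) * (n:ℝ)) • Psupp B = 0 := by rw [zero_mul, zero_smul]
  rw [h0, add_zero]
  rw [Matrix.add_apply, Matrix.smul_apply, Matrix.sum_apply, Matrix.kroneckerMap_apply]
  congr 1
  · rw [Matrix.one_apply]
    split_ifs <;> simp
  · rw [smul_eq_mul]
    congr 1
    rw [Finset.sum_eq_single j]
    · rw [Matrix.kroneckerMap_apply]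
      by_cases h : j = j'
      · subst h; simp [Matrix.single]
      · simp [Matrix.single, h]
    · intro k _ hk
      rw [Matrix.kroneckerMap_apply]
      simp [Matrix.single, hk]
    · intro hj; exact absurd (Finset.mem_univ j) hj

end AmatHelpers

section SumHelpers

variable {n p T : ℕ}

lemma sum_quad {I : Type*} [Fintype I] (G : Matrix (Fin T × Fin p) (Fin T × Fin p) ℝ)
    (q : I → (Fin T × Fin p) → ℝ) :
    ∑ α : Fin T × Fin p, ∑ β : Fin T × Fin p, (∑ i, q i α * q i β) * G α β
      = ∑ i, (q i ⬝ᵥ G *ᵥ q i) := by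
  calc ∑ α : Fin T × Fin p, ∑ β : Fin T × Fin p, (∑ i, q i α * q i β) * G α β
      = ∑ α : Fin T × Fin p, ∑ β : Fin T × Fin p, ∑ i, q i α * q i β * G α β :=
        Finset.sum_congr rfl fun α _ => Finset.sum_congr rfl fun β _ => Finset.sum_mul _ _ _
  _ = ∑ α : Fin T × Fin p, ∑ i, ∑ β : Fin T × Fin p, q i α * q i β * G α β :=
        Finset.sum_congr rfl fun α _ => Finset.sum_comm
  _ = ∑ i, ∑ α : Fin T × Fin p, ∑ β : Fin T × Fin p, q i α * q i β * G α β :=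
        Finset.sum_comm
  _ = ∑ i, (q i ⬝ᵥ G *ᵥ q i) := by
        refine Finset.sum_congr rfl fun i _ => ?_
        simp only [dotProduct, Matrix.mulVec, Finset.mul_sum]
        exact Finset.sum_congr rfl fun α _ => Finset.sum_congr rfl fun β _ => by ring

lemma quadM_eq (lam : ℝ) (X : Matrix (Fin n) (Fin p) ℝ) (B : Matrix (Fin p) (Fin T) ℝ)
    (x : Fin T × Fin p → ℝ) :
    x ⬝ᵥ Mmat n lam 0 X B *ᵥ x
      = (∑ t, (fun j => x (t, j)) ⬝ᵥ (((Xsupp X B)ᵀ * Xsupp X B) *ᵥ fun j => x (t, j)))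
        + (n : ℝ) * ∑ j, (fun t => x (t, j)) ⬝ᵥ (rowHess lam (B j) *ᵥ fun t => x (t, j)) := by
  simp only [dotProduct, Matrix.mulVec, Fintype.sum_prod_type, Mmat_apply,
    add_mul, mul_add, ite_mul, zero_mul, mul_ite, mul_zero, Finset.sum_add_distrib,
    Finset.mul_sum]
  congr 1
  · refine Finset.sum_congr rfl fun t _ => Finset.sum_congr rfl fun j _ => ?_
    rw [Finset.sum_comm]
    refine Finset.sum_congr rfl fun j' _ => ?_
    rw [Finset.sum_ite_eq]
    simp
  · rw [Finset.sum_comm]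
    refine Finset.sum_congr rfl fun j _ => ?_
    refine Finset.sum_congr rfl fun t _ => ?_
    refine Finset.sum_congr rfl fun t' _ => ?_
    rw [Finset.sum_ite_eq, if_pos (Finset.mem_univ j)]
    ring

end SumHelpers

section MHelpers

variable {n p T : ℕ}

lemma Xsupp_eq (X : Matrix (Fin n) (Fin p) ℝ) (B : Matrix (Fin p) (Fin T) ℝ) {j : Fin p}
    (h : B j ≠ 0) (i : Fin n) : Xsupp X B i j = X i j := by
  rw [Xsupp, Matrix.of_apply, if_pos h]

lemma Xsupp_zero (X : Matrix (Fin n) (Fin p) ℝ) (B : Matrix (Fin p) (Fin T) ℝ) {j : Fin p}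
    (h : B j = 0) (i : Fin n) : Xsupp X B i j = 0 := by
  rw [Xsupp, Matrix.of_apply, if_neg (by simp [h])]

lemma K_transpose (X : Matrix (Fin n) (Fin p) ℝ) (B : Matrix (Fin p) (Fin T) ℝ) :
    ((Xsupp X B)ᵀ * Xsupp X B)ᵀ = (Xsupp X B)ᵀ * Xsupp X B := by
  rw [Matrix.transpose_mul, Matrix.transpose_transpose]

lemma K_quad (X : Matrix (Fin n) (Fin p) ℝ) (B : Matrix (Fin p) (Fin T) ℝ) (y : Fin p → ℝ) :
    y ⬝ᵥ ((Xsupp X B)ᵀ * Xsupp X B) *ᵥ y = (Xsupp X B *ᵥ y) ⬝ᵥ (Xsupp X B *ᵥ y) := by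
  rw [← Matrix.mulVec_mulVec, Matrix.dotProduct_mulVec, Matrix.vecMul_transpose]

lemma K_quad_nonneg (X : Matrix (Fin n) (Fin p) ℝ) (B : Matrix (Fin p) (Fin T) ℝ)
    (y : Fin p → ℝ) : 0 ≤ y ⬝ᵥ ((Xsupp X B)ᵀ * Xsupp X B) *ᵥ y := by
  rw [K_quad]
  exact dot_self_nonneg _

lemma Mmat_transpose (lam : ℝ) (X : Matrix (Fin n) (Fin p) ℝ) (B : Matrix (Fin p) (Fin T) ℝ) :
    (Mmat n lam 0 X B)ᵀ = Mmat n lam 0 X B := by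
  ext α β
  obtain ⟨t, j⟩ := α
  obtain ⟨t', j'⟩ := β
  rw [Matrix.transpose_apply, Mmat_apply, Mmat_apply]
  have hK : ((Xsupp X B)ᵀ * Xsupp X B) j' j = ((Xsupp X B)ᵀ * Xsupp X B) j j' := by
    conv_lhs => rw [← K_transpose X B, Matrix.transpose_apply]
  congr 1
  · by_cases h : t = t'
    · subst h; rw [if_pos rfl, if_pos rfl, hK]
    · rw [if_neg (Ne.symm h), if_neg h]
  · congr 1
    by_cases h : j = j'
    · subst h
      rw [if_pos rfl, if_pos rfl]
      conv_lhs => rw [← rowHess_transpose lam (B j), Matrix.transpose_apply]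
    · rw [if_neg (Ne.symm h), if_neg h]

lemma Mmat_col_zero (lam : ℝ) (X : Matrix (Fin n) (Fin p) ℝ) (B : Matrix (Fin p) (Fin T) ℝ)
    {j' : Fin p} (hj' : B j' = 0) (c : Fin T × Fin p) (t' : Fin T) :
    Mmat n lam 0 X B c (t', j') = 0 := by
  obtain ⟨t, j⟩ := c
  rw [Mmat_apply]
  have hK : ((Xsupp X B)ᵀ * Xsupp X B) j j' = 0 := by
    rw [Matrix.mul_apply]
    exact Finset.sum_eq_zero fun i _ => by rw [Xsupp_zero X B hj', mul_zero]
  have hH : rowHess lam (B j') = 0 := by unfold rowHess; rw [if_pos hj']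
  rcases eq_or_ne j j' with h | h
  · subst h
    rw [if_pos rfl, hH]
    split_ifs <;> simp [hK]
  · rw [if_neg h]
    split_ifs <;> simp [hK]

lemma quadM_nonneg {lam : ℝ} (hlam : 0 ≤ lam) (X : Matrix (Fin n) (Fin p) ℝ)
    (B : Matrix (Fin p) (Fin T) ℝ) (x : Fin T × Fin p → ℝ) :
    0 ≤ x ⬝ᵥ Mmat n lam 0 X B *ᵥ x := by
  rw [quadM_eq]
  have h1 : 0 ≤ ∑ t, (fun j => x (t, j)) ⬝ᵥ (((Xsupp X B)ᵀ * Xsupp X B) *ᵥ fun j => x (t, j)) :=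
    Finset.sum_nonneg fun t _ => K_quad_nonneg X B _
  have h2 : 0 ≤ ∑ j, (fun t => x (t, j)) ⬝ᵥ (rowHess lam (B j) *ᵥ fun t => x (t, j)) :=
    Finset.sum_nonneg fun j _ => rowHess_quad_nonneg hlam _ _
  have : (0:ℝ) ≤ (n : ℝ) := Nat.cast_nonneg n
  positivity

lemma quadK_le_quadM {lam : ℝ} (hlam : 0 ≤ lam) (X : Matrix (Fin n) (Fin p) ℝ)
    (B : Matrix (Fin p) (Fin T) ℝ) (x : Fin T × Fin p → ℝ) :
    ∑ t, (fun j => x (t, j)) ⬝ᵥ (((Xsupp X B)ᵀ * Xsupp X B) *ᵥ fun j => x (t, j))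
      ≤ x ⬝ᵥ Mmat n lam 0 X B *ᵥ x := by
  rw [quadM_eq]
  have h2 : 0 ≤ ∑ j, (fun t => x (t, j)) ⬝ᵥ (rowHess lam (B j) *ᵥ fun t => x (t, j)) :=
    Finset.sum_nonneg fun j _ => rowHess_quad_nonneg hlam _ _
  have hn : (0:ℝ) ≤ (n : ℝ) := Nat.cast_nonneg n
  nlinarith

end MHelpers

section AHelpers

variable {n p T : ℕ}

lemma sum5 {A B C D E : Type*} [Fintype A] [Fintype B] [Fintype C] [Fintype D] [Fintype E]
    (f : A → B → C → D → E → ℝ) :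
    (∑ a, ∑ b, ∑ c, ∑ d, ∑ e, f a b c d e)
      = ∑ a, ∑ d, ∑ b, ∑ e, ∑ c, f a b c d e := by
  refine Finset.sum_congr rfl fun a _ => ?_
  calc (∑ b, ∑ c, ∑ d, ∑ e, f a b c d e)
      = ∑ b, ∑ d, ∑ c, ∑ e, f a b c d e :=
        Finset.sum_congr rfl fun b _ => Finset.sum_comm
  _ = ∑ d, ∑ b, ∑ c, ∑ e, f a b c d e := Finset.sum_comm
  _ = ∑ d, ∑ b, ∑ e, ∑ c, f a b c d e :=
        Finset.sum_congr rfl fun d _ => Finset.sum_congr rfl fun b _ => Finset.sum_comm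

lemma Amat_quad_repr (lam : ℝ) (X : Matrix (Fin n) (Fin p) ℝ) (B : Matrix (Fin p) (Fin T) ℝ)
    (u : Fin T → ℝ) :
    u ⬝ᵥ Amat n lam 0 X B *ᵥ u
      = ∑ α : Fin T × Fin p, ∑ β : Fin T × Fin p,
          (∑ i, (u α.1 * X i α.2) * (u β.1 * X i β.2)) * pinv (Mmat n lam 0 X B) α β := by
  simp only [dotProduct, Matrix.mulVec, Amat, Matrix.of_apply, Finset.mul_sum,
    Finset.sum_mul, Fintype.sum_prod_type]
  refine Eq.trans (sum5 _) ?_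
  refine Finset.sum_congr rfl fun t _ => Finset.sum_congr rfl fun j _ => ?_
  refine Finset.sum_congr rfl fun t' _ => Finset.sum_congr rfl fun j' _ => ?_
  refine Finset.sum_congr rfl fun i _ => ?_
  ring

end AHelpers

section CoreHelpers

variable {n p T : ℕ}

lemma pinv_quad_eq {N : Type*} [Fintype N] [DecidableEq N] {M : Matrix N N ℝ}
    (hM : Mᵀ = M) (x : N → ℝ) :
    x ⬝ᵥ pinv M *ᵥ x = (pinv M *ᵥ x) ⬝ᵥ M *ᵥ (pinv M *ᵥ x) := by
  obtain ⟨h1, h2, h3, h4⟩ := pinv_isMP hM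
  have hGt : (pinv M)ᵀ = pinv M := pinv_transpose hM
  conv_lhs => rw [← h2]
  rw [← Matrix.mulVec_mulVec, ← Matrix.mulVec_mulVec, Matrix.dotProduct_mulVec x (pinv M),
    ← Matrix.mulVec_transpose, hGt]

lemma Amat_transpose (lam : ℝ) (X : Matrix (Fin n) (Fin p) ℝ) (B : Matrix (Fin p) (Fin T) ℝ) :
    (Amat n lam 0 X B)ᵀ = Amat n lam 0 X B := by
  have hMt := Mmat_transpose lam X B
  have hGsym : ∀ a b, pinv (Mmat n lam 0 X B) a b = pinv (Mmat n lam 0 X B) b a := by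
    intro a b
    conv_lhs => rw [← pinv_transpose hMt]
    exact Matrix.transpose_apply _ _ _
  ext t t'
  rw [Matrix.transpose_apply]
  simp only [Amat, Matrix.of_apply]
  refine Finset.sum_congr rfl fun i _ => ?_
  rw [Finset.sum_comm]
  refine Finset.sum_congr rfl fun a _ => Finset.sum_congr rfl fun b _ => ?_
  rw [hGsym (t', b) (t, a)]
  ring

lemma Amat_quad_nonneg {lam : ℝ} (hlam : 0 ≤ lam) (X : Matrix (Fin n) (Fin p) ℝ)
    (B : Matrix (Fin p) (Fin T) ℝ) (u : Fin T → ℝ) :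
    0 ≤ u ⬝ᵥ Amat n lam 0 X B *ᵥ u := by
  rw [Amat_quad_repr lam X B u, sum_quad]
  exact Finset.sum_nonneg fun i _ =>
    pinv_quad_nonneg (Mmat_transpose lam X B) (quadM_nonneg hlam X B) _

open scoped MatrixOrder in
lemma Amat_quad_le {lam : ℝ} (hlam : 0 ≤ lam) (X : Matrix (Fin n) (Fin p) ℝ)
    (B : Matrix (Fin p) (Fin T) ℝ) (u : Fin T → ℝ) :
    u ⬝ᵥ Amat n lam 0 X B *ᵥ u ≤ (nnzRows B : ℝ) * (u ⬝ᵥ u) := by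
  classical
  have hMt := Mmat_transpose lam X B
  set M := Mmat n lam 0 X B with hMdef
  set G := pinv M with hGdef
  have hGt : Gᵀ = G := pinv_transpose hMt
  have hGsym : ∀ a b, G a b = G b a := fun a b => by
    conv_lhs => rw [← hGt]
    exact Matrix.transpose_apply _ _ _
  have hGcol : ∀ {j : Fin p}, B j = 0 → ∀ (a : Fin T × Fin p) (t' : Fin T), G a (t', j) = 0 :=
    fun {j} hj a t' => pinv_col_zero hMt (fun c => Mmat_col_zero lam X B hj c _) a
  have hGrow : ∀ {j : Fin p}, B j = 0 → ∀ (t : Fin T) (b : Fin T × Fin p), G (t, j) b = 0 :=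
    fun {j} hj t b => by rw [hGsym]; exact hGcol hj b t
  set K := (Xsupp X B)ᵀ * Xsupp X B with hKdef
  have hKpsd : K.PosSemidef := by
    have := Matrix.posSemidef_conjTranspose_mul_self (Xsupp X B)
    rwa [Matrix.conjTranspose_eq_transpose_of_trivial] at this
  set R := CFC.sqrt K with hRdef
  have hRR : R * R = K := CFC.sqrt_mul_sqrt_self K hKpsd.nonneg
  have hRt : Rᵀ = R := by
    have := (CFC.sqrt_nonneg K).posSemidef.1
    rwa [Matrix.IsHermitian, Matrix.conjTranspose_eq_transpose_of_trivial] at this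
  have hRsym : ∀ a b, R a b = R b a := fun a b => by
    conv_lhs => rw [← hRt]
    exact Matrix.transpose_apply _ _ _
  set v : Fin p → (Fin T × Fin p) → ℝ := fun l α => u α.1 * R α.2 l with hv
  -- quadratic form of K via R
  have hKR : ∀ y : Fin p → ℝ, y ⬝ᵥ K *ᵥ y = (R *ᵥ y) ⬝ᵥ (R *ᵥ y) := by
    intro y
    rw [← hRR, ← Matrix.mulVec_mulVec, Matrix.dotProduct_mulVec]
    conv_lhs => rw [← hRt, Matrix.vecMul_transpose, hRt]
  -- Step 1 : representation as a sum over l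
  have hrepr : u ⬝ᵥ Amat n lam 0 X B *ᵥ u = ∑ l, (v l ⬝ᵥ G *ᵥ v l) := by
    rw [Amat_quad_repr lam X B u]
    simp only [← hMdef, ← hGdef]
    rw [← sum_quad G v]
    refine Finset.sum_congr rfl fun α _ => Finset.sum_congr rfl fun β _ => ?_
    rcases eq_or_ne (B α.2) 0 with h | h
    · have hz : G α β = 0 := by
        obtain ⟨t, j⟩ := α
        exact hGrow h t β
      rw [hz, mul_zero, mul_zero]
    rcases eq_or_ne (B β.2) 0 with h' | h'
    · have hz : G α β = 0 := by
        obtain ⟨t', j'⟩ := β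
        exact hGcol h' α t'
      rw [hz, mul_zero, mul_zero]
    congr 1
    have e2 : K α.2 β.2 = ∑ i, Xsupp X B i α.2 * Xsupp X B i β.2 := by
      rw [hKdef, Matrix.mul_apply]
      exact Finset.sum_congr rfl fun i _ => by rw [Matrix.transpose_apply]
    have e3 : K α.2 β.2 = ∑ l, R α.2 l * R β.2 l := by
      rw [← hRR, Matrix.mul_apply]
      exact Finset.sum_congr rfl fun l _ => by rw [hRsym l β.2]
    calc (∑ i, (u α.1 * X i α.2) * (u β.1 * X i β.2))
        = ∑ i, u α.1 * u β.1 * (Xsupp X B i α.2 * Xsupp X B i β.2) :=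
          Finset.sum_congr rfl fun i _ => by
            rw [Xsupp_eq X B h, Xsupp_eq X B h']; ring
    _ = u α.1 * u β.1 * ∑ i, Xsupp X B i α.2 * Xsupp X B i β.2 := by rw [Finset.mul_sum]
    _ = u α.1 * u β.1 * ∑ l, R α.2 l * R β.2 l := by rw [← e2, e3]
    _ = ∑ l, v l α * v l β := by
          rw [Finset.mul_sum]
          exact Finset.sum_congr rfl fun l _ => by rw [hv]; ring
  -- Step 2 : (x ⬝ᵥ v l)² ≤ (u ⬝ᵥ u) * (x ⬝ᵥ M x)
  have hvM : ∀ (l : Fin p) (x : Fin T × Fin p → ℝ),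
      (x ⬝ᵥ v l) ^ 2 ≤ (u ⬝ᵥ u) * (x ⬝ᵥ M *ᵥ x) := by
    intro l x
    have e : x ⬝ᵥ v l = ∑ t, u t * (R *ᵥ fun j => x (t, j)) l := by
      simp only [dotProduct, Matrix.mulVec, Fintype.sum_prod_type, hv]
      refine Finset.sum_congr rfl fun t _ => ?_
      rw [Finset.mul_sum]
      refine Finset.sum_congr rfl fun j _ => ?_
      rw [hRsym l j]
      ring
    have hcs : (x ⬝ᵥ v l) ^ 2
        ≤ (u ⬝ᵥ u) * ∑ t, ((R *ᵥ fun j => x (t, j)) l) ^ 2 := by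
      rw [e]
      simpa [dotProduct, pow_two] using
        Finset.sum_mul_sq_le_sq_mul_sq Finset.univ u (fun t => (R *ᵥ fun j => x (t, j)) l)
    have hb : ∀ t : Fin T, ((R *ᵥ fun j => x (t, j)) l) ^ 2
        ≤ (fun j => x (t, j)) ⬝ᵥ K *ᵥ (fun j => x (t, j)) := by
      intro t
      rw [hKR]
      have : ((R *ᵥ fun j => x (t, j)) l) ^ 2
          ≤ ∑ l', ((R *ᵥ fun j => x (t, j)) l') ^ 2 :=
        Finset.single_le_sum (f := fun l' => ((R *ᵥ fun j => x (t, j)) l') ^ 2)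
          (fun l' _ => sq_nonneg _) (Finset.mem_univ l)
      simpa [dotProduct, pow_two] using this
    have hsum : ∑ t, ((R *ᵥ fun j => x (t, j)) l) ^ 2 ≤ x ⬝ᵥ M *ᵥ x :=
      le_trans (Finset.sum_le_sum fun t _ => hb t) (quadK_le_quadM hlam X B x)
    calc (x ⬝ᵥ v l) ^ 2 ≤ (u ⬝ᵥ u) * ∑ t, ((R *ᵥ fun j => x (t, j)) l) ^ 2 := hcs
    _ ≤ (u ⬝ᵥ u) * (x ⬝ᵥ M *ᵥ x) := mul_le_mul_of_nonneg_left hsum (dot_self_nonneg u)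
  -- Step 3 : each term is bounded by u ⬝ᵥ u
  have hterm_le : ∀ l : Fin p, v l ⬝ᵥ G *ᵥ v l ≤ u ⬝ᵥ u := by
    intro l
    set a : ℝ := v l ⬝ᵥ G *ᵥ v l with ha
    have ha0 : 0 ≤ a := pinv_quad_nonneg hMt (quadM_nonneg hlam X B) _
    set w : Fin T × Fin p → ℝ := G *ᵥ v l with hw
    have hwv : w ⬝ᵥ v l = a := by rw [hw, dotProduct_comm]
    have hwMw : w ⬝ᵥ M *ᵥ w = a := (pinv_quad_eq hMt (v l)).symm
    have := hvM l w
    rw [hwv, hwMw] at this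
    rcases eq_or_lt_of_le ha0 with h0 | h0
    · rw [← h0]; exact dot_self_nonneg u
    · nlinarith
  -- Step 4 : terms vanish off the support
  have hzero : ∀ l : Fin p, B l = 0 → v l ⬝ᵥ G *ᵥ v l = 0 := by
    intro l hl
    have hKll : K l l = 0 := by
      rw [hKdef, Matrix.mul_apply]
      exact Finset.sum_eq_zero fun i _ => by
        rw [Matrix.transpose_apply, Xsupp_zero X B hl, mul_zero]
    have hRl : ∀ j, R j l = 0 := by
      intro j
      have hKR2 : K l l = ∑ j', (R j' l) ^ 2 := by
        rw [← hRR, Matrix.mul_apply]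
        exact Finset.sum_congr rfl fun j' _ => by rw [hRsym l j', pow_two]
      have hle : (R j l) ^ 2 ≤ 0 := by
        rw [← hKll, hKR2]
        exact Finset.single_le_sum (f := fun j' => (R j' l) ^ 2)
          (fun j' _ => sq_nonneg _) (Finset.mem_univ j)
      exact (pow_eq_zero_iff two_ne_zero).mp (le_antisymm hle (sq_nonneg _))
    have hvl : v l = 0 := by
      funext α
      rw [hv]
      simp [hRl α.2]
    rw [hvl]
    simp
  -- Step 5 : conclude
  rw [hrepr]
  have hfilter : ∑ l, (v l ⬝ᵥ G *ᵥ v l)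
      = ∑ l ∈ Finset.univ.filter (fun l => B l ≠ 0), (v l ⬝ᵥ G *ᵥ v l) := by
    symm
    apply Finset.sum_filter_of_ne
    intro l _ hne
    intro hBl
    exact hne (hzero l hBl)
  rw [hfilter]
  have hcard : (Finset.univ.filter (fun l => B l ≠ 0)).card = nnzRows B := by
    rw [nnzRows]
  calc ∑ l ∈ Finset.univ.filter (fun l => B l ≠ 0), (v l ⬝ᵥ G *ᵥ v l)
      ≤ (Finset.univ.filter (fun l => B l ≠ 0)).card • (u ⬝ᵥ u) :=
        Finset.sum_le_card_nsmul _ _ _ fun l _ => hterm_le l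
  _ = ((Finset.univ.filter (fun l => B l ≠ 0)).card : ℝ) * (u ⬝ᵥ u) := nsmul_eq_mul _ _
  _ = (nnzRows B : ℝ) * (u ⬝ᵥ u) := by rw [hcard]

end CoreHelpers
/-- Lemma: operator norm bounds for the interaction matrix
of the multi-task group Lasso on the sparsity event `U₁`. -/
theorem statement_10 :
    (∀ (n p T : ℕ) (X : Matrix (Fin n) (Fin p) ℝ) (Y : Matrix (Fin n) (Fin T) ℝ)
        (lam c : ℝ), 0 < n → 0 ≤ lam → 0 < c → c < 1 →
      ∀ Bhat : Matrix (Fin p) (Fin T) ℝ,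
        (∀ B, objective n lam 0 Y X Bhat ≤ objective n lam 0 Y X B) →
        (nnzRows Bhat : ℝ) ≤ (n : ℝ) * (1 - c) / 2 →
        (Amat n lam 0 X Bhat).PosSemidef ∧
          opNorm ((n : ℝ)⁻¹ • Amat n lam 0 X Bhat) ≤ (nnzRows Bhat : ℝ) / (n : ℝ) ∧
          (nnzRows Bhat : ℝ) / (n : ℝ) ≤ (1 - c) / 2 ∧
          (1 - c) / 2 < 1 ∧
          opNorm (ImA n lam 0 X Bhat) ≤ 1 ∧
          opNorm ((ImA n lam 0 X Bhat)⁻¹) ≤ 2 / (1 + c)) ∧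
    (∀ (n p T : ℕ) (Ω : Type) (_ms : MeasurableSpace Ω) (P : Measure Ω),
      IsProbabilityMeasure P → 0 < n →
      ∀ (X : Ω → Matrix (Fin n) (Fin p) ℝ) (Y : Ω → Matrix (Fin n) (Fin T) ℝ)
        (lam c : ℝ), 0 ≤ lam → 0 < c → c < 1 →
      ∀ Bhat : Ω → Matrix (Fin p) (Fin T) ℝ, Measurable Bhat →
        (∀ ω B, objective n lam 0 (Y ω) (X ω) (Bhat ω)
            ≤ objective n lam 0 (Y ω) (X ω) B) →
        (∫ ω, (U1set Bhat n c).indicator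
            (fun ω' => opNorm ((ImA n lam 0 (X ω') (Bhat ω'))⁻¹)) ω ∂P)
          ≤ 2 / (1 + c)) := by
  have part1 : ∀ (n p T : ℕ) (X : Matrix (Fin n) (Fin p) ℝ) (Y : Matrix (Fin n) (Fin T) ℝ)
      (lam c : ℝ), 0 < n → 0 ≤ lam → 0 < c → c < 1 →
      ∀ Bhat : Matrix (Fin p) (Fin T) ℝ,
        (∀ B, objective n lam 0 Y X Bhat ≤ objective n lam 0 Y X B) →
        (nnzRows Bhat : ℝ) ≤ (n : ℝ) * (1 - c) / 2 →
        (Amat n lam 0 X Bhat).PosSemidef ∧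
          opNorm ((n : ℝ)⁻¹ • Amat n lam 0 X Bhat) ≤ (nnzRows Bhat : ℝ) / (n : ℝ) ∧
          (nnzRows Bhat : ℝ) / (n : ℝ) ≤ (1 - c) / 2 ∧
          (1 - c) / 2 < 1 ∧
          opNorm (ImA n lam 0 X Bhat) ≤ 1 ∧
          opNorm ((ImA n lam 0 X Bhat)⁻¹) ≤ 2 / (1 + c) := by
    intro n p T X Y lam c hn hlam hc hc1 Bhat _hmin hnnz
    have hn' : (0:ℝ) < (n:ℝ) := Nat.cast_pos.mpr hn
    have hAt : (Amat n lam 0 X Bhat)ᵀ = Amat n lam 0 X Bhat := Amat_transpose lam X Bhat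
    have hA0 : ∀ u, 0 ≤ u ⬝ᵥ Amat n lam 0 X Bhat *ᵥ u := Amat_quad_nonneg hlam X Bhat
    have hA1 : ∀ u, u ⬝ᵥ Amat n lam 0 X Bhat *ᵥ u ≤ (nnzRows Bhat : ℝ) * (u ⬝ᵥ u) :=
      Amat_quad_le hlam X Bhat
    have hnnz0 : (0:ℝ) ≤ (nnzRows Bhat : ℝ) := Nat.cast_nonneg _
    have hq : (nnzRows Bhat : ℝ) / (n : ℝ) ≤ (1 - c) / 2 := by
      rw [div_le_iff₀ hn']
      calc (nnzRows Bhat : ℝ) ≤ (n : ℝ) * (1 - c) / 2 := hnnz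
      _ = (1 - c) / 2 * (n : ℝ) := by ring
    have hq1 : (1 - c) / 2 < 1 := by linarith
    -- quadratic form of the smul matrix
    have hsq : ∀ x : Fin T → ℝ, x ⬝ᵥ ((n : ℝ)⁻¹ • Amat n lam 0 X Bhat) *ᵥ x
        = (n : ℝ)⁻¹ * (x ⬝ᵥ Amat n lam 0 X Bhat *ᵥ x) := by
      intro x
      rw [Matrix.smul_mulVec, dotProduct_smul, smul_eq_mul]
    -- quadratic form of ImA
    have hImA : ∀ x : Fin T → ℝ, x ⬝ᵥ ImA n lam 0 X Bhat *ᵥ x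
        = x ⬝ᵥ x - (n : ℝ)⁻¹ * (x ⬝ᵥ Amat n lam 0 X Bhat *ᵥ x) := by
      intro x
      rw [ImA, Matrix.sub_mulVec, dotProduct_sub, Matrix.one_mulVec,
        Matrix.smul_mulVec, dotProduct_smul, smul_eq_mul]
    have hupper : ∀ x : Fin T → ℝ,
        (n : ℝ)⁻¹ * (x ⬝ᵥ Amat n lam 0 X Bhat *ᵥ x)
          ≤ ((nnzRows Bhat : ℝ) / (n : ℝ)) * (x ⬝ᵥ x) := by
      intro x
      have := mul_le_mul_of_nonneg_left (hA1 x) (inv_pos.mpr hn').le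
      calc (n : ℝ)⁻¹ * (x ⬝ᵥ Amat n lam 0 X Bhat *ᵥ x)
          ≤ (n : ℝ)⁻¹ * ((nnzRows Bhat : ℝ) * (x ⬝ᵥ x)) := this
      _ = ((nnzRows Bhat : ℝ) / (n : ℝ)) * (x ⬝ᵥ x) := by ring
    have hImAt : (ImA n lam 0 X Bhat)ᵀ = ImA n lam 0 X Bhat := by
      rw [ImA, Matrix.transpose_sub, Matrix.transpose_one, Matrix.transpose_smul, hAt]
    have hImA_lower : ∀ x : Fin T → ℝ,
        ((1 + c) / 2) * (x ⬝ᵥ x) ≤ x ⬝ᵥ ImA n lam 0 X Bhat *ᵥ x := by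
      intro x
      rw [hImA]
      have h1 := hupper x
      have h2 : ((nnzRows Bhat : ℝ) / (n : ℝ)) * (x ⬝ᵥ x) ≤ ((1 - c) / 2) * (x ⬝ᵥ x) :=
        mul_le_mul_of_nonneg_right hq (dot_self_nonneg x)
      nlinarith [dot_self_nonneg x]
    refine ⟨?_, ?_, hq, hq1, ?_, ?_⟩
    · refine Matrix.PosSemidef.of_dotProduct_mulVec_nonneg ?_ ?_
      · rw [Matrix.IsHermitian, Matrix.conjTranspose_eq_transpose_of_trivial]
        exact hAt
      · intro x
        simpa using hA0 x
    · refine opNorm_le_of_quad ?_ (div_nonneg hnnz0 hn'.le) ?_ ?_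
      · rw [Matrix.transpose_smul, hAt]
      · intro x
        rw [hsq]
        exact mul_nonneg (inv_pos.mpr hn').le (hA0 x)
      · intro x
        rw [hsq]
        exact hupper x
    · refine opNorm_le_of_quad hImAt zero_le_one ?_ ?_
      · intro x
        have := hImA_lower x
        have h3 : 0 ≤ ((1 + c) / 2) * (x ⬝ᵥ x) :=
          mul_nonneg (by linarith) (dot_self_nonneg x)
        linarith
      · intro x
        rw [hImA, one_mul]
        have h4 : 0 ≤ (n : ℝ)⁻¹ * (x ⬝ᵥ Amat n lam 0 X Bhat *ᵥ x) :=
          mul_nonneg (inv_pos.mpr hn').le (hA0 x)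
        linarith
    · have hε : (0:ℝ) < (1 + c) / 2 := by linarith
      have := opNorm_inv_le hImAt hε hImA_lower
      rwa [inv_div] at this
  refine ⟨part1, ?_⟩
  intro n p T Ω _ms P hP hn X Y lam c hlam hc hc1 Bhat _hBmeas hmin
  haveI := hP
  set C : ℝ := 2 / (1 + c) with hCdef
  have hC0 : 0 ≤ C := by
    rw [hCdef]
    positivity
  have hb : ∀ ω, ‖(U1set Bhat n c).indicator
      (fun ω' => opNorm ((ImA n lam 0 (X ω') (Bhat ω'))⁻¹)) ω‖ ≤ C := by
    intro ω
    by_cases hω : ω ∈ U1set Bhat n c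
    · rw [Set.indicator_of_mem hω]
      have hmem : (nnzRows (Bhat ω) : ℝ) ≤ (n : ℝ) * (1 - c) / 2 := hω
      have hle := (part1 n p T (X ω) (Y ω) lam c hn hlam hc hc1 (Bhat ω)
        (hmin ω) hmem).2.2.2.2.2
      have hnn : 0 ≤ opNorm ((ImA n lam 0 (X ω) (Bhat ω))⁻¹) := by
        rw [opNorm]; exact norm_nonneg _
      rw [Real.norm_eq_abs, abs_of_nonneg hnn]
      exact hle
    · rw [Set.indicator_of_notMem hω, norm_zero]
      exact hC0
  calc (∫ ω, (U1set Bhat n c).indicator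
        (fun ω' => opNorm ((ImA n lam 0 (X ω') (Bhat ω'))⁻¹)) ω ∂P)
      ≤ ‖(∫ ω, (U1set Bhat n c).indicator
          (fun ω' => opNorm ((ImA n lam 0 (X ω') (Bhat ω'))⁻¹)) ω ∂P)‖ := by
        rw [Real.norm_eq_abs]
        exact le_abs_self _
  _ ≤ C * (P Set.univ).toReal :=
      MeasureTheory.norm_integral_le_of_norm_le_const (Filter.Eventually.of_forall hb)
  _ = C := by rw [measure_univ, ENNReal.toReal_one, mul_one]

end MTS
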